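/- Let q and s be integers with 2 < q < s and gcd(q,s) = 1, let k be an integer, let ρ ≥ 0 be a real number, and let α ∈ (0,1) with β := 1 − α. If sin(πk/s) ≠ 0 (equivalently, the imaginary part of e^{πik/s} is nonzero), then (ρ e^{πik/s})^s − β (ρ e^{πik/s})^{s−q} − α ≠ 0. -/

import Mathlib

/-- Forbidden rays for the Type I reduced Ito polynomial `P^I_α(t) = t^s − β t^{s−q} − α`:
if `sin(πk/s) ≠ 0`, then no point `ρ e^{πik/s}` on the corresponding ray is a zero. -/
theorem forbidden_ray_s (q s : ℕ) (hq : 2 < q) (hqs : q < s) (hco : Nat.Coprime q s)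
    (k : ℤ) (ρ : ℝ) (hρ : 0 ≤ ρ) (α : ℝ) (hα : α ∈ Set.Ioo (0 : ℝ) 1)
    (hsin : Real.sin (Real.pi * (k : ℝ) / (s : ℝ)) ≠ 0) :
    ((ρ : ℂ) * Complex.exp (Real.pi * Complex.I * (k : ℂ) / (s : ℂ))) ^ s -
        ((1 : ℂ) - (α : ℂ)) *
          ((ρ : ℂ) * Complex.exp (Real.pi * Complex.I * (k : ℂ) / (s : ℂ))) ^ (s - q) -
        (α : ℂ) ≠ 0 := by
  obtain ⟨hα0, hα1⟩ := hα
  have hs0 : (s : ℝ) ≠ 0 := Nat.cast_ne_zero.mpr (by omega)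
  set θ : ℝ := Real.pi * (k : ℝ) / (s : ℝ) with hθ
  have hexp : Complex.exp (Real.pi * Complex.I * (k : ℂ) / (s : ℂ))
      = Complex.exp ((θ : ℝ) * Complex.I) := by
    congr 1
    rw [hθ]
    push_cast
    ring
  have him : ∀ n : ℕ, (((ρ : ℂ) * Complex.exp ((θ : ℝ) * Complex.I)) ^ n).im
      = ρ ^ n * Real.sin (n * θ) := by
    intro n
    rw [mul_pow, ← Complex.ofReal_pow, ← Complex.exp_nat_mul,
      show (n : ℂ) * ((θ : ℝ) * Complex.I) = ((n * θ : ℝ) : ℂ) * Complex.I from by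
        push_cast; ring]
    simp only [Complex.mul_im, Complex.ofReal_re, Complex.ofReal_im,
      Complex.exp_ofReal_mul_I_im, Complex.exp_ofReal_mul_I_re, mul_zero, zero_mul, add_zero]
  rw [hexp]
  intro heq
  -- case ρ = 0
  rcases eq_or_lt_of_le hρ with hρ0 | hρ0
  · rw [← hρ0] at heq
    simp only [Complex.ofReal_zero, zero_mul, zero_pow (by omega : s ≠ 0),
      zero_pow (by omega : s - q ≠ 0), mul_zero, sub_zero, zero_sub, neg_eq_zero] at heq
    exact absurd (by exact_mod_cast heq) (ne_of_gt hα0)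
  -- take imaginary parts
  have himeq : ρ ^ s * Real.sin (s * θ) - (1 - α) * (ρ ^ (s - q) * Real.sin ((s - q : ℕ) * θ)) = 0 := by
    have := congrArg Complex.im heq
    simpa [Complex.sub_im, him, Complex.mul_im, Complex.ofReal_im, Complex.ofReal_re,
      Complex.one_im, Complex.one_re] using this
  have hsθ : Real.sin (s * θ) = 0 := by
    have : (s : ℝ) * θ = k * Real.pi := by
      rw [hθ]; field_simp
    rw [this]
    exact Real.sin_int_mul_pi k
  have hkey : Real.sin ((s - q : ℕ) * θ) = 0 := by
    have h1 : (1 - α) * (ρ ^ (s - q) * Real.sin ((s - q : ℕ) * θ)) = 0 := by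
      rw [hsθ] at himeq; linarith [himeq]
    have h2 : (1 : ℝ) - α ≠ 0 := by linarith
    have h3 : ρ ^ (s - q) ≠ 0 := pow_ne_zero _ (ne_of_gt hρ0)
    rcases mul_eq_zero.mp h1 with h | h
    · exact absurd h h2
    rcases mul_eq_zero.mp h with h | h
    · exact absurd h h3
    exact h
  -- sin(qθ) = 0
  have hqθ : Real.sin ((q : ℝ) * θ) = 0 := by
    have hdec : ((s - q : ℕ) : ℝ) * θ = (s : ℝ) * θ - (q : ℝ) * θ := by
      push_cast [Nat.cast_sub hqs.le]; ring
    rw [hdec, Real.sin_sub, hsθ] at hkey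
    have hcos : Real.cos ((s : ℝ) * θ) ≠ 0 := by
      have h1 : Real.sin ((s:ℝ)*θ) ^ 2 + Real.cos ((s:ℝ)*θ) ^ 2 = 1 := Real.sin_sq_add_cos_sq _
      intro hc; rw [hc, hsθ] at h1; norm_num at h1
    simp only [zero_mul, zero_sub, neg_eq_zero, mul_eq_zero] at hkey
    rcases hkey with h | h
    · exact absurd h hcos
    · exact h
  -- derive s ∣ k
  obtain ⟨n, hn⟩ := Real.sin_eq_zero_iff.mp hqθ
  have hint : (k : ℤ) * q = n * s := by
    have : (n : ℝ) * Real.pi * s = (q : ℝ) * (Real.pi * k) := by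
      rw [hθ] at hn
      field_simp at hn
      linear_combination Real.pi * hn
    have hpi : Real.pi ≠ 0 := Real.pi_ne_zero
    have : (k : ℝ) * q = n * s := by
      have := this
      nlinarith [Real.pi_pos]
    exact_mod_cast this
  have hdvd : (s : ℤ) ∣ k := by
    have h1 : (s : ℤ) ∣ k * q := ⟨n, by linarith [hint]⟩
    have h2 : IsCoprime (s : ℤ) (q : ℤ) := by
      rw [Int.isCoprime_iff_gcd_eq_one]
      simpa [Int.gcd, Nat.Coprime, Nat.gcd_comm] using hco
    exact h2.dvd_of_dvd_mul_right h1
  obtain ⟨m, hm⟩ := hdvd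
  apply hsin
  have hθm : θ = (m : ℝ) * Real.pi := by
    rw [hθ, hm]; push_cast; field_simp
  rw [hθm]
  exact Real.sin_int_mul_pi m
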